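/- arXiv:2508.07368 — 2 statements merged into one kernel-verified Lean document; each statement's English description precedes it below -/
import Mathlib

section
/- The K-adaptability value for a finite uncertainty set U equals the minimum over all partitions of U into at most K nonempty parts of the maximum over parts P of the robust value inf_{x ∈ X} max_{ξ ∈ P} f(x, ξ). -/
/-- The `K`-adaptability value equals the minimum over clusterings of `U` into at most
`K` parts of the maximum over parts of the robust value of that part. A clustering is
encoded as a map `c : U → Fin K`; the part containing `ξ` is the fiber of `c ξ`. -/
theorem stmt_3 {X U : Type*} [Fintype X] [Nonempty X] [Fintype U] [Nonempty U]
    (f : X → U → ℝ) (K : ℕ) (hK : 1 ≤ K) :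
    (⨅ xs : Fin K → X, ⨆ ξ : U, ⨅ i : Fin K, f (xs i) ξ)
      = ⨅ c : U → Fin K, ⨆ ξ : U, ⨅ x : X, ⨆ ξ' : {ζ : U // c ζ = c ξ}, f x ξ'.1 := by
  have hKne : Nonempty (Fin K) := ⟨⟨0, hK⟩⟩
  apply le_antisymm
  · -- LHS ≤ RHS
    apply le_ciInf
    intro c
    -- for each cluster i, choose a robust minimizer
    have hx : ∀ i : Fin K, ∃ x : X, ∀ y : X,
        (⨆ ζ : {ζ : U // c ζ = i}, f x ζ.1) ≤ ⨆ ζ : {ζ : U // c ζ = i}, f y ζ.1 := by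
      intro i
      obtain ⟨x, hxmin⟩ := Finite.exists_min (fun x : X => ⨆ ζ : {ζ : U // c ζ = i}, f x ζ.1)
      exact ⟨x, hxmin⟩
    choose xs hxs using hx
    refine ciInf_le_of_le (Finite.bddBelow_range _) xs ?_
    refine ciSup_le fun ξ => ?_
    have h1 : (⨅ i : Fin K, f (xs i) ξ) ≤ f (xs (c ξ)) ξ :=
      ciInf_le (Finite.bddBelow_range _) (c ξ)
    have h2 : f (xs (c ξ)) ξ ≤ ⨆ ζ : {ζ : U // c ζ = c ξ}, f (xs (c ξ)) ζ.1 :=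
      le_ciSup (f := fun ζ : {ζ : U // c ζ = c ξ} => f (xs (c ξ)) ζ.1)
        (Finite.bddAbove_range _) ⟨ξ, rfl⟩
    have h3 : (⨆ ζ : {ζ : U // c ζ = c ξ}, f (xs (c ξ)) ζ.1)
        ≤ ⨅ x : X, ⨆ ζ : {ζ : U // c ζ = c ξ}, f x ζ.1 :=
      le_ciInf fun y => hxs (c ξ) y
    have h4 : (⨅ x : X, ⨆ ζ : {ζ : U // c ζ = c ξ}, f x ζ.1)
        ≤ ⨆ ξ : U, ⨅ x : X, ⨆ ζ' : {ζ : U // c ζ = c ξ}, f x ζ'.1 :=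
      le_ciSup (f := fun ξ' : U => ⨅ x : X, ⨆ ζ' : {ζ : U // c ζ = c ξ'}, f x ζ'.1)
        (Finite.bddAbove_range _) ξ
    exact le_trans h1 (le_trans h2 (le_trans h3 h4))
  · -- RHS ≤ LHS
    apply le_ciInf
    intro xs
    -- cluster each ξ by a best policy index
    have hc : ∀ ξ : U, ∃ i : Fin K, ∀ j : Fin K, f (xs i) ξ ≤ f (xs j) ξ := by
      intro ξ
      obtain ⟨i, hi⟩ := Finite.exists_min (fun i : Fin K => f (xs i) ξ)
      exact ⟨i, hi⟩
    choose c hcmin using hc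
    refine ciInf_le_of_le (Finite.bddBelow_range _) c ?_
    refine ciSup_le fun ξ => ?_
    haveI : Nonempty {ζ : U // c ζ = c ξ} := ⟨⟨ξ, rfl⟩⟩
    refine ciInf_le_of_le (Finite.bddBelow_range _) (xs (c ξ)) ?_
    refine ciSup_le fun ζ => ?_
    obtain ⟨ζ, hζ⟩ := ζ
    have h1 : f (xs (c ξ)) ζ = f (xs (c ζ)) ζ := by rw [hζ]
    have h2 : f (xs (c ζ)) ζ ≤ ⨅ i : Fin K, f (xs i) ζ := le_ciInf fun j => hcmin ζ j
    have h3 : (⨅ i : Fin K, f (xs i) ζ) ≤ ⨆ ξ' : U, ⨅ i : Fin K, f (xs i) ξ' :=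
      le_ciSup (f := fun ξ' : U => ⨅ i : Fin K, f (xs i) ξ')
        (Finite.bddAbove_range _) ζ
    calc f (xs (c ξ)) ζ = f (xs (c ζ)) ζ := h1
      _ ≤ _ := le_trans h2 h3
end

section
/- In the hitting-set reduction instance, the K-adaptability problem value is 0 if and only if the hitting set instance has a hitting set of size at most K. Specifically, given items I = {1,...,n} and subsets S_1,...,S_T ⊆ I, define for each l a matrix D^l ∈ ℝ^{(n+1)×n} with D^l_{jj} = 0 if j ∈ S_l and D^l_{jj} = 1 otherwise, all other entries in the first n rows zero, and the (n+1)-th row all ones. Then min over x^1,...,x^K ∈ ℝ^n_{≥0} of max over l ∈ {1,...,T} of min over {i : Σ_j x^i_j ≥ 1} of Σ_j D^l_{jj} x^i_j equals 0 if and only if there exists H ⊆ I with |H| ≤ K such that H ∩ S_l ≠ ∅ for all l. -/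
/-- Hitting-set reduction: the `K`-adaptability value of the constructed instance is `0`
iff there is a hitting set of size at most `K`. -/
theorem stmt_4 (n T K : ℕ) (hn : 0 < n) (hT : 0 < T) (hK : 0 < K)
    (S : Fin T → Finset (Fin n)) :
    sInf {r : ℝ | ∃ x : Fin K → Fin n → ℝ,
        (∀ i j, 0 ≤ x i j) ∧ (∀ i, 1 ≤ ∑ j, x i j) ∧
        r = ⨆ l : Fin T, ⨅ i : Fin K,
              ∑ j, (if j ∈ S l then (0 : ℝ) else 1) * x i j} = 0
      ↔ ∃ H : Finset (Fin n), H.card ≤ K ∧ ∀ l, (H ∩ S l).Nonempty := by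
  classical
  haveI : Nonempty (Fin T) := ⟨⟨0, hT⟩⟩
  haveI : Nonempty (Fin K) := ⟨⟨0, hK⟩⟩
  haveI : Nonempty (Fin n) := ⟨⟨0, hn⟩⟩
  set A : Set ℝ := {r : ℝ | ∃ x : Fin K → Fin n → ℝ,
        (∀ i j, 0 ≤ x i j) ∧ (∀ i, 1 ≤ ∑ j, x i j) ∧
        r = ⨆ l : Fin T, ⨅ i : Fin K,
              ∑ j, (if j ∈ S l then (0 : ℝ) else 1) * x i j} with hA
  -- every term is nonnegative
  have htermnn : ∀ (x : Fin K → Fin n → ℝ), (∀ i j, 0 ≤ x i j) →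
      ∀ (l : Fin T) (i : Fin K),
        0 ≤ ∑ j, (if j ∈ S l then (0 : ℝ) else 1) * x i j := by
    intro x hx l i
    apply Finset.sum_nonneg
    intro j _
    have : (0:ℝ) ≤ (if j ∈ S l then (0 : ℝ) else 1) := by split <;> norm_num
    exact mul_nonneg this (hx i j)
  have hAnonneg : ∀ r ∈ A, (0:ℝ) ≤ r := by
    rintro r ⟨x, hx, hx1, rfl⟩
    have h1 : (0:ℝ) ≤ ⨅ i : Fin K, ∑ j, (if j ∈ S (⟨0, hT⟩ : Fin T) then (0 : ℝ) else 1) * x i j :=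
      le_ciInf fun i => htermnn x hx _ i
    exact h1.trans (le_ciSup (f := fun l : Fin T => ⨅ i : Fin K,
      ∑ j, (if j ∈ S l then (0 : ℝ) else 1) * x i j)
      (Set.Finite.bddAbove (Set.finite_range _)) (⟨0, hT⟩ : Fin T))
  have hAne : A.Nonempty := by
    refine ⟨_, ⟨fun _ _ => (1:ℝ), fun _ _ => zero_le_one, ?_, rfl⟩⟩
    intro i
    simp only [Finset.sum_const, Finset.card_univ, Fintype.card_fin, nsmul_eq_mul, mul_one]
    exact_mod_cast hn
  constructor
  · intro h0
    by_contra hcon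
    push_neg at hcon
    have hlb : ∀ r ∈ A, (1:ℝ)/n ≤ r := by
      rintro r ⟨x, hx, hx1, rfl⟩
      have hex : ∀ i : Fin K, ∃ j, (1:ℝ)/n ≤ x i j := by
        intro i
        by_contra hc
        push_neg at hc
        have hlt : ∑ j, x i j < ∑ _j : Fin n, (1:ℝ)/n :=
          Finset.sum_lt_sum_of_nonempty Finset.univ_nonempty (fun j _ => hc j)
        have : ∑ _j : Fin n, (1:ℝ)/n = 1 := by
          simp only [Finset.sum_const, Finset.card_univ, Fintype.card_fin, nsmul_eq_mul]
          field_simp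
        rw [this] at hlt
        exact absurd (hx1 i) (not_le.mpr hlt)
      choose jf hjf using hex
      obtain ⟨l, hl⟩ := hcon (Finset.image jf Finset.univ)
        (le_trans Finset.card_image_le (by simp))
      have hl : Finset.image jf Finset.univ ∩ S l = ∅ := hl
      have hnot : ∀ i, jf i ∉ S l := by
        intro i hi
        have : jf i ∈ Finset.image jf Finset.univ ∩ S l :=
          Finset.mem_inter.mpr ⟨Finset.mem_image_of_mem _ (Finset.mem_univ i), hi⟩
        simp [hl] at this
      have h1 : ∀ i, (1:ℝ)/n ≤ ∑ j, (if j ∈ S l then (0 : ℝ) else 1) * x i j := by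
        intro i
        calc (1:ℝ)/n ≤ x i (jf i) := hjf i
          _ = (if jf i ∈ S l then (0 : ℝ) else 1) * x i (jf i) := by simp [hnot i]
          _ ≤ ∑ j, (if j ∈ S l then (0 : ℝ) else 1) * x i j := by
              refine Finset.single_le_sum
                (f := fun j => (if j ∈ S l then (0 : ℝ) else 1) * x i j)
                (fun j _ => ?_) (Finset.mem_univ (jf i))
              have : (0:ℝ) ≤ (if j ∈ S l then (0 : ℝ) else 1) := by split <;> norm_num
              exact mul_nonneg this (hx i j)
      have h2 : (1:ℝ)/n ≤ ⨅ i : Fin K, ∑ j, (if j ∈ S l then (0 : ℝ) else 1) * x i j :=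
        le_ciInf h1
      exact h2.trans (le_ciSup (f := fun l : Fin T => ⨅ i : Fin K,
        ∑ j, (if j ∈ S l then (0 : ℝ) else 1) * x i j)
        (Set.Finite.bddAbove (Set.finite_range _)) l)
    have : (1:ℝ)/n ≤ 0 := h0 ▸ le_csInf hAne hlb
    have hpos : (0:ℝ) < 1/n := by positivity
    linarith
  · rintro ⟨H, hcard, hhit⟩
    obtain ⟨a0, ha0⟩ := hhit ⟨0, hT⟩
    have ha0H : a0 ∈ H := (Finset.mem_inter.mp ha0).1
    let hfun : Fin K → Fin n := fun i =>
      if hi : (i : ℕ) < H.card then ((H.equivFin.symm ⟨i, hi⟩ : {y // y ∈ H}) : Fin n) else a0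
    have hcover : ∀ a ∈ H, ∃ i : Fin K, hfun i = a := by
      intro a ha
      refine ⟨⟨(H.equivFin ⟨a, ha⟩ : Fin H.card), lt_of_lt_of_le (H.equivFin ⟨a, ha⟩).2 hcard⟩, ?_⟩
      simp only [hfun, dif_pos (H.equivFin ⟨a, ha⟩).2, Fin.eta, Equiv.symm_apply_apply]
    let x : Fin K → Fin n → ℝ := fun i j => if j = hfun i then 1 else 0
    have hxnn : ∀ i j, (0:ℝ) ≤ x i j := by
      intro i j; simp only [x]; split <;> norm_num
    have hval : ∀ (l : Fin T) (i : Fin K),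
        ∑ j, (if j ∈ S l then (0 : ℝ) else 1) * x i j
          = if hfun i ∈ S l then (0:ℝ) else 1 := by
      intro l i
      have hterm : ∀ j, (if j ∈ S l then (0 : ℝ) else 1) * x i j
          = if j = hfun i then (if j ∈ S l then (0 : ℝ) else 1) else 0 := by
        intro j
        simp only [x]
        split <;> simp
      rw [Finset.sum_congr rfl fun j _ => hterm j, Finset.sum_ite_eq' Finset.univ]
      simp
    have h0mem : (0:ℝ) ∈ A := by
      refine ⟨x, hxnn, ?_, ?_⟩
      · intro i
        simp [x, Finset.sum_ite_eq' Finset.univ]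
      · have hinf0 : ∀ l : Fin T,
            (⨅ i : Fin K, ∑ j, (if j ∈ S l then (0 : ℝ) else 1) * x i j) = 0 := by
          intro l
          obtain ⟨a, ha⟩ := hhit l
          rw [Finset.mem_inter] at ha
          obtain ⟨i, hi⟩ := hcover a ha.1
          apply le_antisymm
          · calc (⨅ i : Fin K, ∑ j, (if j ∈ S l then (0 : ℝ) else 1) * x i j)
                ≤ ∑ j, (if j ∈ S l then (0 : ℝ) else 1) * x i j :=
                  ciInf_le (Set.Finite.bddBelow (Set.finite_range _)) i
              _ = 0 := by rw [hval l i, hi, if_pos ha.2]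
          · exact le_ciInf fun i => htermnn x hxnn l i
        simp only [hinf0, ciSup_const]
    exact le_antisymm
      (csInf_le ⟨0, fun r hr => hAnonneg r hr⟩ h0mem)
      (le_csInf hAne hAnonneg)
end
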